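/- The eigenvalues of the adjacency matrix of the Johnson graph J(n,k) are exactly the numbers θ_i = (k−i)(n−k−i) − i for i = 0, 1, ..., k. -/

import Mathlib

/-- The Johnson graph `J(n,k)`: vertices are the `k`-element subsets of an
`n`-element set, two vertices adjacent when their intersection has `k-1` elements. -/
def johnsonGraph (n k : ℕ) : SimpleGraph {s : Finset (Fin n) // s.card = k} where
  Adj x y := (x.1 ∩ y.1).card = k - 1 ∧ x ≠ y
  symm := by
    constructor
    intro x y h
    exact ⟨by rw [Finset.inter_comm]; exact h.1, h.2.symm⟩
  loopless := by
    constructor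
    intro x h
    exact h.2 rfl

instance (n k : ℕ) : DecidableRel (johnsonGraph n k).Adj :=
  fun x y => inferInstanceAs (Decidable ((x.1 ∩ y.1).card = k - 1 ∧ x ≠ y))


open Matrix Finset


namespace JohnsonAux

abbrev V (n k : ℕ) := {s : Finset (Fin n) // s.card = k}

/-- incidence matrix between k-sets and (k+1)-sets -/
def inc (n k : ℕ) : Matrix (V n k) (V n (k+1)) ℝ :=
  fun t s => if t.1 ⊆ s.1 then 1 else 0

lemma transpose_mul_inc {n k : ℕ} (s s' : V n (k+1)) :
    ((inc n k)ᵀ * inc n k) s s' = ((s.1 ∩ s'.1).card.choose k : ℝ) := by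
  classical
  have step : ∀ t : V n k,
      (inc n k)ᵀ s t * inc n k t s' = if t.1 ⊆ s.1 ∩ s'.1 then (1:ℝ) else 0 := by
    intro t
    by_cases h1 : t.1 ⊆ s.1 <;> by_cases h2 : t.1 ⊆ s'.1 <;>
      simp [inc, Matrix.transpose_apply, h1, h2, Finset.subset_inter_iff]
  rw [Matrix.mul_apply]
  simp_rw [step]
  rw [Finset.sum_boole]
  congr 1
  have hcard : (Finset.univ.filter fun t : V n k => t.1 ⊆ s.1 ∩ s'.1).card
      = (Finset.powersetCard k (s.1 ∩ s'.1)).card := by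
    apply Finset.card_bij (fun t _ => t.1)
    · intro t ht
      simp only [Finset.mem_filter] at ht
      exact Finset.mem_powersetCard.2 ⟨ht.2, t.2⟩
    · intro a ha b hb h
      exact Subtype.ext h
    · intro w hw
      obtain ⟨hsub, hcard⟩ := Finset.mem_powersetCard.1 hw
      exact ⟨⟨w, hcard⟩, by simp [hsub], rfl⟩
  rw [hcard, Finset.card_powersetCard]

lemma card_supersets {n k : ℕ} (u : Finset (Fin n)) (hu : u.card ≤ k+1) :
    (Finset.univ.filter fun s : V n (k+1) => u ⊆ s.1).card
      = (n - u.card).choose (k+1 - u.card) := by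
  classical
  have h : (Finset.univ.filter fun s : V n (k+1) => u ⊆ s.1).card
      = (Finset.powersetCard (k+1-u.card) uᶜ).card := by
    apply Finset.card_bij' (fun s _ => s.1 \ u)
      (fun w hw => ⟨w ∪ u, by
        obtain ⟨hsub, hcard⟩ := Finset.mem_powersetCard.1 hw
        have hdisj : Disjoint w u :=
          Finset.disjoint_left.2 fun a haw hau => (Finset.mem_compl.1 (hsub haw)) hau
        rw [Finset.card_union_of_disjoint hdisj, hcard]
        omega⟩)
    case hi =>
      intro s hs
      simp only [Finset.mem_filter] at hs
      refine Finset.mem_powersetCard.2 ⟨fun a ha => ?_, ?_⟩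
      · exact Finset.mem_compl.2 (Finset.mem_sdiff.1 ha).2
      · rw [Finset.card_sdiff_of_subset hs.2, s.2]
    case hj =>
      intro w hw
      simp
    case left_inv =>
      intro s hs
      simp only [Finset.mem_filter] at hs
      exact Subtype.ext (Finset.sdiff_union_of_subset hs.2)
    case right_inv =>
      intro w hw
      obtain ⟨hsub, hcard⟩ := Finset.mem_powersetCard.1 hw
      have hdisj : Disjoint w u :=
        Finset.disjoint_left.2 fun a haw hau => (Finset.mem_compl.1 (hsub haw)) hau
      exact Finset.union_sdiff_cancel_right hdisj
  rw [h, Finset.card_powersetCard, Finset.card_compl, Fintype.card_fin]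

lemma inc_identity1 {n k : ℕ} :
    (inc n k)ᵀ * inc n k
      = (johnsonGraph n (k+1)).adjMatrix ℝ + ((k:ℝ)+1) • 1 := by
  classical
  ext s s'
  rw [transpose_mul_inc]
  by_cases h : s = s'
  · subst h
    have h1 : (s.1 ∩ s.1).card = k+1 := by rw [Finset.inter_self, s.2]
    rw [h1, Nat.choose_succ_self_right]
    simp only [Matrix.add_apply, SimpleGraph.adjMatrix_apply,
      Matrix.smul_apply, Matrix.one_apply_eq, smul_eq_mul, mul_one,
      if_neg ((johnsonGraph n (k+1)).irrefl)]
    push_cast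
    ring
  · have hne : s.1 ≠ s'.1 := fun he => h (Subtype.ext he)
    have hle : (s.1 ∩ s'.1).card ≤ k := by
      by_contra hlt
      push_neg at hlt
      have hcard : s.1.card ≤ (s.1 ∩ s'.1).card := by rw [s.2]; omega
      have heq : s.1 ∩ s'.1 = s.1 :=
        Finset.eq_of_subset_of_card_le Finset.inter_subset_left hcard
      have hsub : s.1 ⊆ s'.1 := Finset.inter_eq_left.1 heq
      exact hne (Finset.eq_of_subset_of_card_le hsub (by rw [s.2, s'.2]))
    have hAdj : (johnsonGraph n (k+1)).Adj s s' ↔ (s.1 ∩ s'.1).card = k := by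
      constructor
      · intro ha; have := ha.1; omega
      · intro ha; exact ⟨by omega, h⟩
    by_cases hm : (s.1 ∩ s'.1).card = k
    · rw [hm, Nat.choose_self]
      simp [Matrix.one_apply_ne h, hAdj.2 hm]
    · rw [Nat.choose_eq_zero_of_lt (by omega)]
      have : ¬ (johnsonGraph n (k+1)).Adj s s' := fun ha => hm (hAdj.1 ha)
      simp [Matrix.one_apply_ne h, this]

lemma inc_identity2 {n k : ℕ} (hn : 2*(k+1) ≤ n) :
    inc n k * (inc n k)ᵀ
      = (johnsonGraph n k).adjMatrix ℝ + ((n:ℝ) - (k:ℝ)) • 1 := by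
  classical
  ext t t'
  have step : ∀ s : V n (k+1), inc n k t s * (inc n k)ᵀ s t'
      = if t.1 ∪ t'.1 ⊆ s.1 then (1:ℝ) else 0 := by
    intro s
    by_cases h1 : t.1 ⊆ s.1 <;> by_cases h2 : t'.1 ⊆ s.1 <;>
      simp [inc, Matrix.transpose_apply, h1, h2, Finset.union_subset_iff]
  rw [Matrix.mul_apply]
  simp_rw [step]
  rw [Finset.sum_boole]
  by_cases h : t = t'
  · subst h
    have hu : t.1 ∪ t.1 = t.1 := Finset.union_self _
    have hcnt := card_supersets (n := n) (k := k) t.1 (by rw [t.2]; omega)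
    simp_rw [hu, hcnt, t.2]
    have h1 : k + 1 - k = 1 := by omega
    rw [h1, Nat.choose_one_right]
    simp only [Matrix.add_apply, SimpleGraph.adjMatrix_apply,
      Matrix.smul_apply, Matrix.one_apply_eq, smul_eq_mul, mul_one,
      if_neg ((johnsonGraph n k).irrefl)]
    rw [Nat.cast_sub (by omega : k ≤ n)]
    ring
  · have hne : t.1 ≠ t'.1 := fun he => h (Subtype.ext he)
    have hk1 : 1 ≤ k := by
      by_contra hk0
      have hk : k = 0 := by omega
      have ht0 : t.1 = ∅ := Finset.card_eq_zero.1 (by rw [t.2, hk])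
      have ht0' : t'.1 = ∅ := Finset.card_eq_zero.1 (by rw [t'.2, hk])
      exact hne (by rw [ht0, ht0'])
    have hcap_lt : (t.1 ∩ t'.1).card < k := by
      rcases Nat.lt_or_ge (t.1 ∩ t'.1).card k with h' | h'
      · exact h'
      · exfalso
        have hcard : t.1.card ≤ (t.1 ∩ t'.1).card := by rw [t.2]; omega
        have heq : t.1 ∩ t'.1 = t.1 :=
          Finset.eq_of_subset_of_card_le Finset.inter_subset_left hcard
        have hsub : t.1 ⊆ t'.1 := Finset.inter_eq_left.1 heq
        exact hne (Finset.eq_of_subset_of_card_le hsub (by rw [t.2, t'.2]))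
    have hsum : (t.1 ∪ t'.1).card + (t.1 ∩ t'.1).card = k + k := by
      rw [Finset.card_union_add_card_inter, t.2, t'.2]
    by_cases hadj : (t.1 ∩ t'.1).card = k - 1
    · have hu : (t.1 ∪ t'.1).card = k + 1 := by omega
      have hcnt := card_supersets (n := n) (k := k) (t.1 ∪ t'.1) (by omega)
      rw [hcnt, hu]
      have h1 : k + 1 - (k+1) = 0 := by omega
      rw [h1, Nat.choose_zero_right]
      simp [Matrix.one_apply_ne h, SimpleGraph.adjMatrix_apply]
      exact (show (johnsonGraph n k).Adj t t' from ⟨hadj, h⟩)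
    · have hu : k + 1 < (t.1 ∪ t'.1).card := by omega
      have hempty : (Finset.univ.filter fun s : V n (k+1) => t.1 ∪ t'.1 ⊆ s.1) = ∅ := by
        rw [Finset.filter_eq_empty_iff]
        intro s _ hsub
        have := Finset.card_le_card hsub
        rw [s.2] at this
        omega
      rw [hempty]
      have hnadj : ¬ (johnsonGraph n k).Adj t t' := fun ha => hadj ha.1
      simp [Matrix.one_apply_ne h, hnadj]

lemma shift_eig {m : Type*} [Fintype m] [DecidableEq m] (B : Matrix m m ℝ) (c x : ℝ)
    (v : m → ℝ) : (B + c • (1 : Matrix m m ℝ)) *ᵥ v = (x + c) • v ↔ B *ᵥ v = x • v := by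
  rw [Matrix.add_mulVec, Matrix.smul_mulVec, Matrix.one_mulVec, add_smul]
  constructor
  · exact fun h => add_right_cancel h
  · intro h; rw [h]

lemma scalar_zero {m : Type*} (c : ℝ) (v : m → ℝ) (hv : v ≠ 0) (h : c • v = 0) : c = 0 := by
  obtain ⟨a, ha⟩ := Function.ne_iff.1 hv
  have h2 := congrFun h a
  simp only [Pi.smul_apply, smul_eq_mul, Pi.zero_apply] at h2
  rcases mul_eq_zero.1 h2 with h' | h'
  · exact h'
  · exact absurd h' ha

lemma exists_ker_vec {α β : Type*} [Fintype α] [Fintype β]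
    (M : Matrix α β ℝ) (h : Fintype.card α < Fintype.card β) :
    ∃ v : β → ℝ, v ≠ 0 ∧ M *ᵥ v = 0 := by
  by_contra hc
  push_neg at hc
  have hker : LinearMap.ker M.mulVecLin = ⊥ := by
    rw [Matrix.ker_mulVecLin_eq_bot_iff]
    intro v hv
    by_contra hv0
    exact (hc v hv0) hv
  have hinj : Function.Injective M.mulVecLin := LinearMap.ker_eq_bot.1 hker
  have hle := LinearMap.finrank_le_finrank_of_injective hinj
  rw [Module.finrank_fintype_fun_eq_card, Module.finrank_fintype_fun_eq_card] at hle
  omega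

lemma choose_lt {n k : ℕ} (h : 2*(k+1) ≤ n) : n.choose k < n.choose (k+1) := by
  have h1 := Nat.choose_succ_right_eq n k
  have hpos : 0 < n.choose k := Nat.choose_pos (by omega)
  have h2 : n.choose k * (k+1) < n.choose k * (n-k) := by
    exact mul_lt_mul_of_pos_left (by omega : k+1 < n-k) hpos
  rw [← h1] at h2
  exact Nat.lt_of_mul_lt_mul_right h2

lemma johnson_aux (n : ℕ) : ∀ k : ℕ, 2 * k ≤ n → ∀ x : ℝ,
    ((∃ v : V n k → ℝ, v ≠ 0 ∧ (johnsonGraph n k).adjMatrix ℝ *ᵥ v = x • v) ↔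
      ∃ i : ℕ, i ≤ k ∧ x = ((k : ℝ) - i) * ((n : ℝ) - (k : ℝ) - i) - i) := by
  intro k
  induction k with
  | zero =>
    intro _ x
    have hA : (johnsonGraph n 0).adjMatrix ℝ = 0 := by
      ext a b
      have hab : a = b := Subtype.ext (by
        rw [Finset.card_eq_zero.1 a.2, Finset.card_eq_zero.1 b.2])
      simp only [SimpleGraph.adjMatrix_apply, Matrix.zero_apply, ite_eq_right_iff]
      intro hadj
      exact absurd hab hadj.2
    constructor
    · rintro ⟨v, hv, heq⟩
      rw [hA, Matrix.zero_mulVec] at heq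
      have hx : x = 0 := scalar_zero x v hv heq.symm
      exact ⟨0, le_refl 0, by rw [hx]; norm_num⟩
    · rintro ⟨i, hi, hx⟩
      have hi0 : i = 0 := Nat.le_zero.1 hi
      subst hi0
      have hx0 : x = 0 := by rw [hx]; norm_num
      refine ⟨fun _ => 1, ?_, ?_⟩
      · intro h0
        have := congrFun h0 ⟨∅, Finset.card_empty⟩
        simp at this
      · rw [hA, Matrix.zero_mulVec, hx0, zero_smul]
  | succ k ih =>
    intro hkn x
    have ihk := ih (by omega)
    have hA1 := inc_identity1 (n := n) (k := k)
    have hA2 := inc_identity2 (n := n) (k := k) hkn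
    set M := inc n k with hM
    constructor
    · rintro ⟨v, hv, heq⟩
      have hMM : (Mᵀ * M) *ᵥ v = (x + ((k:ℝ)+1)) • v := by
        rw [hA1]
        exact (shift_eig _ _ x v).2 heq
      by_cases hx0 : x + ((k:ℝ)+1) = 0
      · refine ⟨k+1, le_refl _, ?_⟩
        push_cast
        rw [sub_self, zero_mul, zero_sub]
        linarith
      · set w := M *ᵥ v with hw
        have hw0 : w ≠ 0 := by
          intro h0
          have h1 : (Mᵀ * M) *ᵥ v = 0 := by
            rw [← Matrix.mulVec_mulVec, ← hw, h0, Matrix.mulVec_zero]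
          rw [hMM] at h1
          exact hx0 (scalar_zero _ v hv h1)
        have hMMT : (M * Mᵀ) *ᵥ w = (x + ((k:ℝ)+1)) • w := by
          calc (M * Mᵀ) *ᵥ (M *ᵥ v) = (M * Mᵀ * M) *ᵥ v := by
                rw [Matrix.mulVec_mulVec]
            _ = M *ᵥ ((Mᵀ * M) *ᵥ v) := by
                rw [Matrix.mul_assoc, Matrix.mulVec_mulVec]
            _ = (x + ((k:ℝ)+1)) • (M *ᵥ v) := by rw [hMM, Matrix.mulVec_smul]
        have hAk : (johnsonGraph n k).adjMatrix ℝ *ᵥ w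
            = (x + ((k:ℝ)+1) - ((n:ℝ)-(k:ℝ))) • w := by
          apply (shift_eig _ ((n:ℝ)-(k:ℝ)) _ w).1
          rw [← hA2]
          convert hMMT using 2
          ring
        obtain ⟨i, hik, hy⟩ := (ihk _).1 ⟨w, hw0, hAk⟩
        refine ⟨i, by omega, ?_⟩
        push_cast
        push_cast at hy
        nlinarith [hy, sq_nonneg ((k:ℝ) - i)]
    · rintro ⟨i, hik, hx⟩
      by_cases hik1 : i = k+1
      · subst hik1
        have hx0 : x = -((k:ℝ)+1) := by rw [hx]; push_cast; ring
        have hcard : Fintype.card (V n k) < Fintype.card (V n (k+1)) := by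
          rw [Fintype.card_finset_len, Fintype.card_finset_len, Fintype.card_fin]
          exact choose_lt hkn
        obtain ⟨v, hv, hker⟩ := exists_ker_vec M hcard
        refine ⟨v, hv, ?_⟩
        apply (shift_eig _ ((k:ℝ)+1) x v).1
        rw [← hA1, ← Matrix.mulVec_mulVec, hker, Matrix.mulVec_zero, hx0]
        rw [neg_add_cancel, zero_smul]
      · have hik' : i ≤ k := by omega
        obtain ⟨u, hu, hequ⟩ :=
          (ihk (((k:ℝ)-(i:ℝ))*((n:ℝ)-(k:ℝ)-(i:ℝ)) - (i:ℝ))).2 ⟨i, hik', rfl⟩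
        set y := ((k:ℝ)-(i:ℝ))*((n:ℝ)-(k:ℝ)-(i:ℝ)) - (i:ℝ) with hy
        have hMMT : (M * Mᵀ) *ᵥ u = (y + ((n:ℝ)-(k:ℝ))) • u := by
          rw [hA2]
          exact (shift_eig _ _ y u).2 hequ
        set v := Mᵀ *ᵥ u with hvdef
        have hv0 : v ≠ 0 := by
          intro h0
          have h1 : (M * Mᵀ) *ᵥ u = 0 := by
            rw [← Matrix.mulVec_mulVec, ← hvdef, h0, Matrix.mulVec_zero]
          rw [hMMT] at h1
          have h2 : y + ((n:ℝ)-(k:ℝ)) = 0 := scalar_zero _ u hu h1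
          have hki : (i:ℝ) ≤ (k:ℝ) := Nat.cast_le.2 hik'
          have hnk : ((2*(k+1):ℕ):ℝ) ≤ (n:ℝ) := Nat.cast_le.2 hkn
          push_cast at hnk
          rw [hy] at h2
          nlinarith [mul_nonneg (by linarith : (0:ℝ) ≤ (k:ℝ)-(i:ℝ))
            (by linarith : (0:ℝ) ≤ (n:ℝ)-(k:ℝ)-(i:ℝ)), Nat.cast_nonneg (α := ℝ) i]
        refine ⟨v, hv0, ?_⟩
        have hMTM : (Mᵀ * M) *ᵥ v = (y + ((n:ℝ)-(k:ℝ))) • v := by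
          calc (Mᵀ * M) *ᵥ (Mᵀ *ᵥ u) = (Mᵀ * M * Mᵀ) *ᵥ u := by
                rw [Matrix.mulVec_mulVec]
            _ = Mᵀ *ᵥ ((M * Mᵀ) *ᵥ u) := by
                rw [Matrix.mul_assoc, Matrix.mulVec_mulVec]
            _ = (y + ((n:ℝ)-(k:ℝ))) • (Mᵀ *ᵥ u) := by rw [hMMT, Matrix.mulVec_smul]
        apply (shift_eig _ ((k:ℝ)+1) x v).1
        rw [← hA1, hMTM]
        congr 1
        rw [hy, hx]
        push_cast
        ring

end JohnsonAux



/-- The eigenvalues of the adjacency matrix of the Johnson graph `J(n,k)` are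
exactly the numbers `θᵢ = (k-i)(n-k-i) - i` for `i = 0, 1, …, k`. -/
theorem johnson_eigenvalues (n k : ℕ) (hk : 0 < k) (hkn : 2 * k ≤ n) (x : ℝ) :
    (∃ v : {s : Finset (Fin n) // s.card = k} → ℝ, v ≠ 0 ∧
        (johnsonGraph n k).adjMatrix ℝ *ᵥ v = x • v) ↔
      ∃ i : ℕ, i ≤ k ∧
        x = ((k : ℝ) - i) * ((n : ℝ) - (k : ℝ) - i) - i := by
  exact JohnsonAux.johnson_aux n k hkn x
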